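/- For λ > 0, s ≥ 0 and any real x, the improper integral ∫_s^∞ p(r−s, x, λ(r−s)) dr equals (1/λ)·exp(−λ(|x|−x)), where p(u, x, m) = (2πu)^{-1/2}·exp(−(x−m)²/(2u)). -/

import Mathlib

open MeasureTheory Real

/-- Gaussian density with variance `t` and mean `m`, evaluated at `x`. -/
noncomputable def gaussDensity (t x m : ℝ) : ℝ :=
  Real.exp (-(x - m) ^ 2 / (2 * t)) / Real.sqrt (2 * Real.pi * t)

open Set Filter Topology

noncomputable def ndf (t : ℝ) : ℝ := Real.exp (-(1/2) * t ^ 2)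

lemma ndf_integrable : Integrable ndf := integrable_exp_neg_mul_sq (by norm_num)

lemma ndf_cont : Continuous ndf := by unfold ndf; fun_prop

lemma ndf_nonneg (t : ℝ) : 0 ≤ ndf t := (Real.exp_pos _).le

lemma ndf_neg (t : ℝ) : ndf (-t) = ndf t := by simp [ndf]

lemma integral_ndf : ∫ t, ndf t = Real.sqrt (2 * π) := by
  have h := integral_gaussian (1/2 : ℝ)
  have : (fun t : ℝ => ndf t) = fun t : ℝ => Real.exp (-(1/2 : ℝ) * t ^ 2) := rfl
  rw [this, h, show π/(1/2:ℝ) = 2*π by ring]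

lemma integral_ndf_Ioi : ∫ t in Ioi (0:ℝ), ndf t = Real.sqrt (2 * π) / 2 := by
  have h := integral_gaussian_Ioi (1/2 : ℝ)
  have : (fun t : ℝ => ndf t) = fun t : ℝ => Real.exp (-(1/2 : ℝ) * t ^ 2) := rfl
  rw [this, h, show π/(1/2:ℝ) = 2*π by ring]

noncomputable def Phi (y : ℝ) : ℝ := ∫ t in Iic y, ndf t

lemma Phi_hasDerivAt (y : ℝ) : HasDerivAt Phi (ndf y) y := by
  have h : Phi = fun z => Phi 0 + ∫ t in (0:ℝ)..z, ndf t := by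
    funext z
    simp only [Phi]
    rw [← intervalIntegral.integral_Iic_sub_Iic ndf_integrable.integrableOn
      ndf_integrable.integrableOn]
    ring
  rw [h]
  exact (intervalIntegral.integral_hasDerivAt_right
    ndf_integrable.intervalIntegrable
    ndf_cont.stronglyMeasurable.stronglyMeasurableAtFilter
    ndf_cont.continuousAt).const_add _

lemma Phi_cont : Continuous Phi :=
  continuous_iff_continuousAt.2 fun y => (Phi_hasDerivAt y).continuousAt

lemma Phi_zero : Phi 0 = Real.sqrt (2 * π) / 2 := by
  have h := integral_comp_neg_Iic (0:ℝ) ndf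
  simp only [ndf_neg, neg_zero] at h
  rw [Phi, h, integral_ndf_Ioi]

lemma Phi_tendsto_atTop : Tendsto Phi atTop (𝓝 (Real.sqrt (2 * π))) := by
  rw [← integral_ndf]
  have heq : ∀ y : ℝ, Phi y = ∫ t, (Iic y).indicator ndf t := fun y =>
    (integral_indicator measurableSet_Iic).symm
  simp only [funext heq]
  refine tendsto_integral_filter_of_dominated_convergence ndf ?_ ?_ ndf_integrable ?_
  · exact Eventually.of_forall fun y =>
      (ndf_cont.stronglyMeasurable.indicator measurableSet_Iic).aestronglyMeasurable
  · refine Eventually.of_forall fun y => Eventually.of_forall fun t => ?_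
    by_cases ht : t ∈ Iic y
    · simp [Set.indicator_of_mem ht, Real.norm_eq_abs, abs_of_nonneg (ndf_nonneg t)]
    · simp [Set.indicator_of_notMem ht, ndf_nonneg t]
  · refine Eventually.of_forall fun t => ?_
    refine tendsto_const_nhds.congr' ?_
    filter_upwards [eventually_ge_atTop t] with y hy
    simp [Set.indicator_of_mem (mem_Iic.2 hy)]

lemma Phi_tendsto_atBot : Tendsto Phi atBot (𝓝 0) := by
  have heq : ∀ y : ℝ, Phi y = ∫ t, (Iic y).indicator ndf t := fun y =>
    (integral_indicator measurableSet_Iic).symm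
  have h0 : (0:ℝ) = ∫ t : ℝ, (0:ℝ) := by simp
  rw [h0]
  simp only [funext heq]
  refine tendsto_integral_filter_of_dominated_convergence ndf ?_ ?_ ndf_integrable ?_
  · exact Eventually.of_forall fun y =>
      (ndf_cont.stronglyMeasurable.indicator measurableSet_Iic).aestronglyMeasurable
  · refine Eventually.of_forall fun y => Eventually.of_forall fun t => ?_
    by_cases ht : t ∈ Iic y
    · simp [Set.indicator_of_mem ht, Real.norm_eq_abs, abs_of_nonneg (ndf_nonneg t)]
    · simp [Set.indicator_of_notMem ht, ndf_nonneg t]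
  · refine Eventually.of_forall fun t => ?_
    refine tendsto_const_nhds.congr' ?_
    filter_upwards [eventually_lt_atBot t] with y hy
    rw [Set.indicator_of_notMem (by simpa using hy.not_ge)]

noncomputable def Gfun (lam x u : ℝ) : ℝ :=
  if u ≤ 0 then (1 - Real.exp (-lam * (|x| - x))) / lam
  else (Phi (lam * Real.sqrt u - x / Real.sqrt u)
        - Real.exp (2 * lam * x) * Phi (-lam * Real.sqrt u - x / Real.sqrt u))
       / (lam * Real.sqrt (2 * π))

lemma Gfun_hasDerivAt (lam x : ℝ) (hlam : 0 < lam) {u : ℝ} (hu : 0 < u) :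
    HasDerivAt (Gfun lam x) (gaussDensity u x (lam * u)) u := by
  set c := Real.sqrt u with hc
  have hcpos : 0 < c := Real.sqrt_pos.2 hu
  have hc2 : c ^ 2 = u := Real.sq_sqrt hu.le
  have h2π : Real.sqrt (2 * π) ≠ 0 := by positivity
  have hsq : HasDerivAt Real.sqrt (1 / (2 * c)) u := Real.hasDerivAt_sqrt hu.ne'
  have hinv : HasDerivAt (fun v : ℝ => x / Real.sqrt v) (-(x / (2 * c * u))) u := by
    simp only [div_eq_mul_inv]
    have h2 : HasDerivAt (fun v : ℝ => x * (Real.sqrt v)⁻¹) _ u := (hsq.inv hcpos.ne').const_mul x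
    convert h2 using 1
    rw [← hc, hc2]
    field_simp
  have hg : HasDerivAt (fun v => lam * Real.sqrt v - x / Real.sqrt v)
      (lam * (1 / (2 * c)) - (-(x / (2 * c * u)))) u := (hsq.const_mul lam).sub hinv
  have hh : HasDerivAt (fun v => -lam * Real.sqrt v - x / Real.sqrt v)
      (-lam * (1 / (2 * c)) - (-(x / (2 * c * u)))) u := (hsq.const_mul (-lam)).sub hinv
  have hPg := (Phi_hasDerivAt (lam * c - x / c)).comp u hg
  have hPh := (Phi_hasDerivAt (-lam * c - x / c)).comp u hh
  have hF : HasDerivAt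
      (fun v => (Phi (lam * Real.sqrt v - x / Real.sqrt v)
        - Real.exp (2 * lam * x) * Phi (-lam * Real.sqrt v - x / Real.sqrt v))
        / (lam * Real.sqrt (2 * π)))
      ((ndf (lam * c - x / c) * (lam * (1 / (2 * c)) - (-(x / (2 * c * u))))
        - Real.exp (2 * lam * x) * (ndf (-lam * c - x / c)
            * (-lam * (1 / (2 * c)) - (-(x / (2 * c * u))))))
        / (lam * Real.sqrt (2 * π))) u :=
    (hPg.sub (hPh.const_mul _)).div_const _
  have e1 : ndf (lam * c - x / c) = Real.exp (-(x - lam * u) ^ 2 / (2 * u)) := by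
    unfold ndf; congr 1
    rw [← hc2]; field_simp; ring
  have e2 : Real.exp (2 * lam * x) * ndf (-lam * c - x / c)
      = Real.exp (-(x - lam * u) ^ 2 / (2 * u)) := by
    unfold ndf
    rw [← Real.exp_add]; congr 1
    rw [← hc2]; field_simp; ring
  have hval : (ndf (lam * c - x / c) * (lam * (1 / (2 * c)) - (-(x / (2 * c * u))))
        - Real.exp (2 * lam * x) * (ndf (-lam * c - x / c)
            * (-lam * (1 / (2 * c)) - (-(x / (2 * c * u))))))
        / (lam * Real.sqrt (2 * π)) = gaussDensity u x (lam * u) := by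
    rw [show Real.exp (2 * lam * x) * (ndf (-lam * c - x / c)
            * (-lam * (1 / (2 * c)) - (-(x / (2 * c * u)))))
        = (Real.exp (2 * lam * x) * ndf (-lam * c - x / c))
            * (-lam * (1 / (2 * c)) - (-(x / (2 * c * u)))) from (mul_assoc _ _ _).symm,
      e1, e2, gaussDensity, Real.sqrt_mul (by positivity : (0:ℝ) ≤ 2 * π) u, ← hc]
    rw [← hc2]
    have hE := Real.exp_pos (-(x - lam * c ^ 2) ^ 2 / (2 * c ^ 2))
    field_simp
    ring
  rw [← hval]
  refine hF.congr_of_eventuallyEq ?_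
  filter_upwards [eventually_gt_nhds hu] with v hv
  simp only [Gfun, if_neg (not_le.2 hv)]

lemma sqrt_tendsto_atTop : Tendsto Real.sqrt atTop atTop := by
  apply tendsto_atTop_atTop_of_monotone (fun a b h => Real.sqrt_le_sqrt h)
  intro b
  exact ⟨(max b 0) ^ 2, by rw [Real.sqrt_sq (le_max_right _ _)]; exact le_max_left _ _⟩

lemma sqrt_tendsto_zero_right : Tendsto Real.sqrt (𝓝[>] (0:ℝ)) (𝓝[>] (0:ℝ)) := by
  rw [tendsto_nhdsWithin_iff]
  refine ⟨?_, ?_⟩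
  · have h0 := Real.continuous_sqrt.tendsto (0:ℝ)
    rw [Real.sqrt_zero] at h0
    exact h0.mono_left nhdsWithin_le_nhds
  · filter_upwards [self_mem_nhdsWithin] with u hu
    exact Real.sqrt_pos.2 hu

lemma Gfun_tendsto_atTop (lam x : ℝ) (hlam : 0 < lam) :
    Tendsto (Gfun lam x) atTop (𝓝 (1 / lam)) := by
  have h2π : Real.sqrt (2 * π) ≠ 0 := by positivity
  have hxdiv : Tendsto (fun u : ℝ => x / Real.sqrt u) atTop (𝓝 0) := by
    simp only [div_eq_mul_inv]
    simpa using (tendsto_inv_atTop_zero.comp sqrt_tendsto_atTop).const_mul x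
  have hlsqrt : Tendsto (fun u : ℝ => lam * Real.sqrt u) atTop atTop :=
    sqrt_tendsto_atTop.const_mul_atTop hlam
  have hg : Tendsto (fun u : ℝ => lam * Real.sqrt u - x / Real.sqrt u) atTop atTop := by
    simp only [sub_eq_add_neg]
    exact hlsqrt.atTop_add hxdiv.neg
  have hh : Tendsto (fun u : ℝ => -lam * Real.sqrt u - x / Real.sqrt u) atTop atBot := by
    have : Tendsto (fun u : ℝ => -lam * Real.sqrt u) atTop atBot := by
      simpa using (tendsto_const_mul_atBot_of_neg (neg_neg_iff_pos.2 hlam)).2 sqrt_tendsto_atTop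
    simp only [sub_eq_add_neg]
    exact this.atBot_add hxdiv.neg
  have hF : Tendsto (fun u : ℝ =>
      (Phi (lam * Real.sqrt u - x / Real.sqrt u)
        - Real.exp (2 * lam * x) * Phi (-lam * Real.sqrt u - x / Real.sqrt u))
       / (lam * Real.sqrt (2 * π))) atTop
      (𝓝 ((Real.sqrt (2 * π) - Real.exp (2 * lam * x) * 0) / (lam * Real.sqrt (2 * π)))) :=
    (((Phi_tendsto_atTop.comp hg).sub ((Phi_tendsto_atBot.comp hh).const_mul _)).div_const _)
  have heq : (Real.sqrt (2 * π) - Real.exp (2 * lam * x) * 0) / (lam * Real.sqrt (2 * π))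
      = 1 / lam := by field_simp; ring
  rw [heq] at hF
  refine hF.congr' ?_
  filter_upwards [eventually_gt_atTop (0:ℝ)] with u hu
  simp only [Gfun, if_neg (not_le.2 hu)]

lemma Gfun_continuousWithinAt (lam x : ℝ) (hlam : 0 < lam) :
    ContinuousWithinAt (Gfun lam x) (Ici 0) 0 := by
  have h2π : Real.sqrt (2 * π) ≠ 0 := by positivity
  have hG0 : Gfun lam x 0 = (1 - Real.exp (-lam * (|x| - x))) / lam := if_pos le_rfl
  rw [ContinuousWithinAt, hG0]
  have hIci : Ici (0:ℝ) = {0} ∪ Ioi 0 := by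
    ext v; simp [le_iff_lt_or_eq, eq_comm, or_comm]
  rw [hIci, nhdsWithin_union, nhdsWithin_singleton, tendsto_sup]
  constructor
  · rw [tendsto_pure_left]
    intro U hU
    rw [hG0]
    exact mem_of_mem_nhds hU
  · have heq : ∀ᶠ u in 𝓝[>] (0:ℝ), (Phi (lam * Real.sqrt u - x / Real.sqrt u)
        - Real.exp (2 * lam * x) * Phi (-lam * Real.sqrt u - x / Real.sqrt u))
       / (lam * Real.sqrt (2 * π)) = Gfun lam x u := by
      filter_upwards [self_mem_nhdsWithin] with u hu
      simp only [Gfun, if_neg (not_le.2 (show (0:ℝ) < u from hu))]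
    refine Tendsto.congr' heq ?_
    have hl0 : Tendsto (fun u : ℝ => lam * Real.sqrt u) (𝓝[>] (0:ℝ)) (𝓝 0) := by
      simpa using (sqrt_tendsto_zero_right.mono_right nhdsWithin_le_nhds).const_mul lam
    have hml0 : Tendsto (fun u : ℝ => -lam * Real.sqrt u) (𝓝[>] (0:ℝ)) (𝓝 0) := by
      simpa using (sqrt_tendsto_zero_right.mono_right nhdsWithin_le_nhds).const_mul (-lam)
    have hinv : Tendsto (fun u : ℝ => (Real.sqrt u)⁻¹) (𝓝[>] (0:ℝ)) atTop :=
      tendsto_inv_nhdsGT_zero.comp sqrt_tendsto_zero_right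
    rcases lt_trichotomy x 0 with hx | hx | hx
    · -- x < 0 : both arguments tend to +∞
      have hgx : Tendsto (fun u : ℝ => lam * Real.sqrt u - x / Real.sqrt u)
          (𝓝[>] (0:ℝ)) atTop := by
        simp only [sub_eq_add_neg, div_eq_mul_inv, ← neg_mul]
        exact hl0.add_atTop (hinv.const_mul_atTop (neg_pos.2 hx))
      have hhx : Tendsto (fun u : ℝ => -lam * Real.sqrt u - x / Real.sqrt u)
          (𝓝[>] (0:ℝ)) atTop := by
        simp only [sub_eq_add_neg, div_eq_mul_inv, ← neg_mul]
        exact hml0.add_atTop (hinv.const_mul_atTop (neg_pos.2 hx))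
      have hF := (((Phi_tendsto_atTop.comp hgx).sub
        ((Phi_tendsto_atTop.comp hhx).const_mul (Real.exp (2 * lam * x)))).div_const
          (lam * Real.sqrt (2 * π)))
      convert hF using 2
      · rfl
      rw [abs_of_neg hx, show -lam * (-x - x) = 2 * lam * x by ring]
      field_simp
    · -- x = 0
      subst hx
      simp only [zero_div, sub_zero]
      have hF := ((((Phi_cont.tendsto 0).comp hl0).sub
        (((Phi_cont.tendsto 0).comp hml0).const_mul (Real.exp (2 * lam * 0)))).div_const
          (lam * Real.sqrt (2 * π)))
      convert hF using 2
      · rfl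
      simp
    · -- x > 0 : both arguments tend to -∞
      have hgx : Tendsto (fun u : ℝ => lam * Real.sqrt u - x / Real.sqrt u)
          (𝓝[>] (0:ℝ)) atBot := by
        simp only [sub_eq_add_neg, div_eq_mul_inv, ← neg_mul]
        exact hl0.add_atBot ((tendsto_const_mul_atBot_of_neg (neg_neg_iff_pos.2 hx)).2 hinv)
      have hhx : Tendsto (fun u : ℝ => -lam * Real.sqrt u - x / Real.sqrt u)
          (𝓝[>] (0:ℝ)) atBot := by
        simp only [sub_eq_add_neg, div_eq_mul_inv, ← neg_mul]
        exact hml0.add_atBot ((tendsto_const_mul_atBot_of_neg (neg_neg_iff_pos.2 hx)).2 hinv)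
      have hF := (((Phi_tendsto_atBot.comp hgx).sub
        ((Phi_tendsto_atBot.comp hhx).const_mul (Real.exp (2 * lam * x)))).div_const
          (lam * Real.sqrt (2 * π)))
      convert hF using 2
      · rfl
      rw [abs_of_pos hx]
      simp

lemma integrand_integrableOn (lam x s : ℝ) (hlam : 0 < lam) :
    IntegrableOn (fun r => gaussDensity (r - s) x (lam * (r - s))) (Ioi s) := by
  set b : ℝ := lam ^ 2 / 2 with hb
  have hbpos : 0 < b := by positivity
  -- integrable majorant on Ioi 0
  have maj0 : IntegrableOn (fun u : ℝ => u ^ (-(1/2) : ℝ) * Real.exp (-b * u)) (Ioi 0) := by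
    have h := integrableOn_rpow_mul_exp_neg_mul_rpow (s := (-(1/2) : ℝ)) (p := 1)
      (by norm_num) one_pos hbpos
    simpa using h
  -- shifted majorant
  have hemb : MeasurableEmbedding (fun r : ℝ => r - s) :=
    (Homeomorph.subRight s).measurableEmbedding
  have hmap : Measure.map (fun r : ℝ => r - s) volume = volume := by
    simp_rw [sub_eq_add_neg]
    exact map_add_right_eq_self volume (-s)
  have hpre : (fun r : ℝ => r - s) ⁻¹' (Ioi 0) = Ioi s := by
    ext r; simp [sub_pos]
  have maj : IntegrableOn
      (fun r : ℝ => (r - s) ^ (-(1/2) : ℝ) * Real.exp (-b * (r - s))) (Ioi s) := by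
    have := (hemb.integrableOn_map_iff
      (f := fun u : ℝ => u ^ (-(1/2) : ℝ) * Real.exp (-b * u)) (μ := volume)
      (s := Ioi 0))
    rw [hmap, hpre] at this
    exact this.1 maj0
  -- measurability of the integrand
  have hmeas : AEStronglyMeasurable (fun r => gaussDensity (r - s) x (lam * (r - s)))
      (volume.restrict (Ioi s)) := by
    apply ContinuousOn.aestronglyMeasurable _ measurableSet_Ioi
    unfold gaussDensity
    apply ContinuousOn.div
    · exact Real.continuous_exp.comp_continuousOn
        (ContinuousOn.div (by fun_prop) (by fun_prop)
          (fun r hr => by have : (0:ℝ) < r - s := sub_pos.2 hr; positivity))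
    · exact (Real.continuous_sqrt.comp (by fun_prop)).continuousOn
    · intro r hr
      have : (0:ℝ) < r - s := sub_pos.2 hr
      positivity
  -- comparison
  refine Integrable.mono' (maj.const_mul (Real.exp (lam * x) / Real.sqrt (2 * π))) hmeas ?_
  rw [ae_restrict_iff' measurableSet_Ioi]
  refine ae_of_all _ fun r hr => ?_
  have hu : (0:ℝ) < r - s := sub_pos.2 hr
  set u : ℝ := r - s
  have hsu : (0:ℝ) < Real.sqrt u := Real.sqrt_pos.2 hu
  have h2π : (0:ℝ) < Real.sqrt (2 * π) := by positivity
  have hrpow : u ^ (-(1/2) : ℝ) = (Real.sqrt u)⁻¹ := by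
    rw [Real.sqrt_eq_rpow, ← Real.rpow_neg hu.le]
  have hgd : gaussDensity u x (lam * u)
      = Real.exp (-(x - lam * u) ^ 2 / (2 * u)) / (Real.sqrt (2 * π) * Real.sqrt u) := by
    rw [gaussDensity, Real.sqrt_mul (by positivity : (0:ℝ) ≤ 2 * π)]
  have hRHS : Real.exp (lam * x) / Real.sqrt (2 * π) * (u ^ (-(1/2) : ℝ) * Real.exp (-b * u))
      = Real.exp (lam * x + -b * u) / (Real.sqrt (2 * π) * Real.sqrt u) := by
    rw [hrpow, Real.exp_add]
    field_simp
  have hnorm : ‖gaussDensity u x (lam * u)‖ = gaussDensity u x (lam * u) := by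
    rw [Real.norm_eq_abs, abs_of_nonneg]
    rw [gaussDensity]
    positivity
  rw [hnorm, hgd, hRHS]
  gcongr
  have key : lam * x + -b * u - (-(x - lam * u) ^ 2 / (2 * u)) = x ^ 2 / (2 * u) := by
    rw [hb]; field_simp; ring
  have hx2 : (0:ℝ) ≤ x ^ 2 / (2 * u) := by positivity
  linarith

theorem stmt_7 (lam s x : ℝ) (hlam : 0 < lam) (hs : 0 ≤ s) :
    ∫ r in Set.Ioi s, gaussDensity (r - s) x (lam * (r - s)) =
      (1 / lam) * Real.exp (-lam * (|x| - x)) := by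
  have hcont : ContinuousWithinAt (fun r => Gfun lam x (r - s)) (Ici s) s := by
    have h1 : ContinuousWithinAt (Gfun lam x) (Ici 0) ((fun r : ℝ => r - s) s) := by
      simpa using Gfun_continuousWithinAt lam x hlam
    have h2 : ContinuousWithinAt (fun r : ℝ => r - s) (Ici s) s :=
      (continuous_id.sub continuous_const).continuousWithinAt
    exact ContinuousWithinAt.comp (g := Gfun lam x) (f := fun r : ℝ => r - s) h1 h2
      (fun r hr => mem_Ici.2 (sub_nonneg.2 hr))
  have hderiv : ∀ r ∈ Ioi s, HasDerivAt (fun r => Gfun lam x (r - s))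
      (gaussDensity (r - s) x (lam * (r - s))) r := by
    intro r hr
    have h := (Gfun_hasDerivAt lam x hlam (sub_pos.2 hr)).comp r
      ((hasDerivAt_id r).sub_const s)
    simp at h; exact h
  have htop : Tendsto (fun r => Gfun lam x (r - s)) atTop (𝓝 (1 / lam)) := by
    refine (Gfun_tendsto_atTop lam x hlam).comp ?_
    simp only [sub_eq_add_neg]
    exact tendsto_atTop_add_const_right atTop (-s) tendsto_id
  have key := integral_Ioi_of_hasDerivAt_of_tendsto hcont hderiv
    (integrand_integrableOn lam x s hlam) htop
  rw [key, show s - s = 0 from sub_self s, Gfun, if_pos le_rfl]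
  field_simp
  ring
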